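/- Let L = so(3,ℂ) with basis x_1, x_2, x_3 and [x_i, x_{i+1}] = x_{i+2} (indices mod 3), graded by H = (Z/2)^2 with L_{(1,0)} = ⟨x_1⟩, L_{(1,1)} = ⟨x_2⟩, L_{(0,1)} = ⟨x_3⟩. Define ε by ε((1,0),(1,1)) = ε((1,1),(1,0)) = 1 and zero otherwise, and ε' by ε'((1,1),(0,1)) = ε'((0,1),(1,1)) = 1 and zero otherwise. Then L^ε and L^{ε'} are isomorphic as Lie algebras (by a grading-permuting isomorphism), but there is no isomorphism preserving each homogeneous component, since the center of L^ε is L_{(0,1)} while the center of L^{ε'} is L_{(1,0)}. -/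

import Mathlib

/-- `L = so(3,ℂ)`, modelled as `ℂ³` with the cross product as Lie bracket, so that
the standard basis vectors `x₁ = e₀, x₂ = e₁, x₃ = e₂` satisfy `[xᵢ, xᵢ₊₁] = xᵢ₊₂`. -/
abbrev L3 : Type := Fin 3 → ℂ

/-- The `(ℤ/2)²`-grading with `L₍₁,₀₎ = ⟨x₁⟩`, `L₍₁,₁₎ = ⟨x₂⟩`, `L₍₀,₁₎ = ⟨x₃⟩`. -/
noncomputable def ℒ3 : ZMod 2 × ZMod 2 → Submodule ℂ L3 := fun g =>
  if g = (1, 0) then Submodule.span ℂ {![1, 0, 0]}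
  else if g = (1, 1) then Submodule.span ℂ {![0, 1, 0]}
  else if g = (0, 1) then Submodule.span ℂ {![0, 0, 1]}
  else ⊥

/-- `ε`, supported on `((1,0),(1,1))` and `((1,1),(1,0))` with value `1`. -/
def eps : ZMod 2 × ZMod 2 → ZMod 2 × ZMod 2 → ℂ := fun g h =>
  if (g = (1, 0) ∧ h = (1, 1)) ∨ (g = (1, 1) ∧ h = (1, 0)) then 1 else 0

/-- `ε'`, supported on `((1,1),(0,1))` and `((0,1),(1,1))` with value `1`. -/
def eps' : ZMod 2 × ZMod 2 → ZMod 2 × ZMod 2 → ℂ := fun g h =>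
  if (g = (1, 1) ∧ h = (0, 1)) ∨ (g = (0, 1) ∧ h = (1, 1)) then 1 else 0

lemma mem10 : (![1,0,0] : L3) ∈ ℒ3 (1,0) := by
  show _ ∈ (if _ then _ else _)
  rw [if_pos rfl]; exact Submodule.mem_span_singleton_self _

lemma mem11 : (![0,1,0] : L3) ∈ ℒ3 (1,1) := by
  show _ ∈ (if _ then _ else _)
  rw [if_neg (by decide), if_pos rfl]; exact Submodule.mem_span_singleton_self _

lemma mem01 : (![0,0,1] : L3) ∈ ℒ3 (0,1) := by
  show _ ∈ (if _ then _ else _)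
  rw [if_neg (by decide), if_neg (by decide), if_pos rfl]
  exact Submodule.mem_span_singleton_self _

lemma decomp (x : L3) : x = x 0 • ![1,0,0] + x 1 • ![0,1,0] + x 2 • ![0,0,1] := by
  funext i; fin_cases i <;> simp

lemma keyB (B : L3 →ₗ[ℂ] L3 →ₗ[ℂ] L3)
    (hB : ∀ g h : ZMod 2 × ZMod 2, ∀ x ∈ ℒ3 g, ∀ y ∈ ℒ3 h,
      B x y = eps g h • crossProduct x y) (x y : L3) :
    B x y = (x 0 * y 1 - x 1 * y 0) • ![0,0,1] := by
  have e00 : B ![1,0,0] ![1,0,0] = 0 := by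
    rw [hB (1,0) (1,0) _ mem10 _ mem10, eps]; rw [if_neg (by decide), zero_smul]
  have e01 : B ![1,0,0] ![0,1,0] = ![0,0,1] := by
    rw [hB (1,0) (1,1) _ mem10 _ mem11, eps, if_pos (by decide), one_smul, cross_apply]
    norm_num
    exact ⟨rfl, rfl⟩
  have e02 : B ![1,0,0] ![0,0,1] = 0 := by
    rw [hB (1,0) (0,1) _ mem10 _ mem01, eps, if_neg (by decide), zero_smul]
  have e10 : B ![0,1,0] ![1,0,0] = ![0,0,-1] := by
    rw [hB (1,1) (1,0) _ mem11 _ mem10, eps, if_pos (by decide), one_smul, cross_apply]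
    norm_num
    exact ⟨rfl, rfl⟩
  have e11 : B ![0,1,0] ![0,1,0] = 0 := by
    rw [hB (1,1) (1,1) _ mem11 _ mem11, eps, if_neg (by decide), zero_smul]
  have e12 : B ![0,1,0] ![0,0,1] = 0 := by
    rw [hB (1,1) (0,1) _ mem11 _ mem01, eps, if_neg (by decide), zero_smul]
  have e20 : B ![0,0,1] ![1,0,0] = 0 := by
    rw [hB (0,1) (1,0) _ mem01 _ mem10, eps, if_neg (by decide), zero_smul]
  have e21 : B ![0,0,1] ![0,1,0] = 0 := by
    rw [hB (0,1) (1,1) _ mem01 _ mem11, eps, if_neg (by decide), zero_smul]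
  have e22 : B ![0,0,1] ![0,0,1] = 0 := by
    rw [hB (0,1) (0,1) _ mem01 _ mem01, eps, if_neg (by decide), zero_smul]
  conv_lhs => rw [decomp x, decomp y]
  simp only [map_add, map_smul, LinearMap.add_apply, LinearMap.smul_apply,
    e00, e01, e02, e10, e11, e12, e20, e21, e22]
  funext i; fin_cases i <;> simp <;> ring
lemma keyB' (B' : L3 →ₗ[ℂ] L3 →ₗ[ℂ] L3)
    (hB' : ∀ g h : ZMod 2 × ZMod 2, ∀ x ∈ ℒ3 g, ∀ y ∈ ℒ3 h,
      B' x y = eps' g h • crossProduct x y) (x y : L3) :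
    B' x y = (x 1 * y 2 - x 2 * y 1) • ![1,0,0] := by
  have e00 : B' ![1,0,0] ![1,0,0] = 0 := by
    rw [hB' (1,0) (1,0) _ mem10 _ mem10, eps', if_neg (by decide), zero_smul]
  have e01 : B' ![1,0,0] ![0,1,0] = 0 := by
    rw [hB' (1,0) (1,1) _ mem10 _ mem11, eps', if_neg (by decide), zero_smul]
  have e02 : B' ![1,0,0] ![0,0,1] = 0 := by
    rw [hB' (1,0) (0,1) _ mem10 _ mem01, eps', if_neg (by decide), zero_smul]
  have e10 : B' ![0,1,0] ![1,0,0] = 0 := by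
    rw [hB' (1,1) (1,0) _ mem11 _ mem10, eps', if_neg (by decide), zero_smul]
  have e11 : B' ![0,1,0] ![0,1,0] = 0 := by
    rw [hB' (1,1) (1,1) _ mem11 _ mem11, eps', if_neg (by decide), zero_smul]
  have e12 : B' ![0,1,0] ![0,0,1] = ![1,0,0] := by
    rw [hB' (1,1) (0,1) _ mem11 _ mem01, eps', if_pos (by decide), one_smul, cross_apply]
    norm_num
    rfl
  have e20 : B' ![0,0,1] ![1,0,0] = 0 := by
    rw [hB' (0,1) (1,0) _ mem01 _ mem10, eps', if_neg (by decide), zero_smul]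
  have e21 : B' ![0,0,1] ![0,1,0] = ![-1,0,0] := by
    rw [hB' (0,1) (1,1) _ mem01 _ mem11, eps', if_pos (by decide), one_smul, cross_apply]
    norm_num
    rfl
  have e22 : B' ![0,0,1] ![0,0,1] = 0 := by
    rw [hB' (0,1) (0,1) _ mem01 _ mem01, eps', if_neg (by decide), zero_smul]
  conv_lhs => rw [decomp x, decomp y]
  simp only [map_add, map_smul, LinearMap.add_apply, LinearMap.smul_apply,
    e00, e01, e02, e10, e11, e12, e20, e21, e22]
  funext i; fin_cases i <;> simp <;> ring

noncomputable def φ0 : L3 ≃ₗ[ℂ] L3 where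
  toFun x := ![x 2, x 0, x 1]
  invFun x := ![x 1, x 2, x 0]
  map_add' x y := by funext i; fin_cases i <;> simp
  map_smul' c x := by funext i; fin_cases i <;> simp
  left_inv x := by funext i; fin_cases i <;> simp
  right_inv x := by funext i; fin_cases i <;> simp

lemma L3_bot (g : ZMod 2 × ZMod 2) (h1 : g ≠ (1,0)) (h2 : g ≠ (1,1)) (h3 : g ≠ (0,1)) :
    ℒ3 g = ⊥ := by
  show (if _ then _ else _) = ⊥
  rw [if_neg h1, if_neg h2, if_neg h3]

lemma L3_10 : ℒ3 (1,0) = Submodule.span ℂ {![1,0,0]} := by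
  show (if _ then _ else _) = _; rw [if_pos rfl]

lemma L3_11 : ℒ3 (1,1) = Submodule.span ℂ {![0,1,0]} := by
  show (if _ then _ else _) = _; rw [if_neg (by decide), if_pos rfl]

lemma L3_01 : ℒ3 (0,1) = Submodule.span ℂ {![0,0,1]} := by
  show (if _ then _ else _) = _; rw [if_neg (by decide), if_neg (by decide), if_pos rfl]

/-- For the contracted brackets `B = [·,·]^ε` and `B' = [·,·]^{ε'}`
on `so(3,ℂ)`: the Lie algebras `L^ε` and `L^{ε'}` are isomorphic via a
grading-permuting isomorphism, but no isomorphism preserves each homogeneous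
component; indeed the center of `L^ε` is `L₍₀,₁₎` while that of `L^{ε'}` is `L₍₁,₀₎`. -/
theorem so3_equivalent_not_strongly
    (B B' : L3 →ₗ[ℂ] L3 →ₗ[ℂ] L3)
    (hB : ∀ g h : ZMod 2 × ZMod 2, ∀ x ∈ ℒ3 g, ∀ y ∈ ℒ3 h,
      B x y = eps g h • crossProduct x y)
    (hB' : ∀ g h : ZMod 2 × ZMod 2, ∀ x ∈ ℒ3 g, ∀ y ∈ ℒ3 h,
      B' x y = eps' g h • crossProduct x y) :
    (∃ φ : L3 ≃ₗ[ℂ] L3, (∀ x y : L3, φ (B x y) = B' (φ x) (φ y)) ∧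
      ∀ g : ZMod 2 × ZMod 2, ∃ g' : ZMod 2 × ZMod 2,
        (ℒ3 g).map (φ : L3 →ₗ[ℂ] L3) = ℒ3 g') ∧
    (¬ ∃ φ : L3 ≃ₗ[ℂ] L3, (∀ x y : L3, φ (B x y) = B' (φ x) (φ y)) ∧
      ∀ g : ZMod 2 × ZMod 2, (ℒ3 g).map (φ : L3 →ₗ[ℂ] L3) = ℒ3 g) ∧
    {x : L3 | ∀ y : L3, B x y = 0} = (ℒ3 (0, 1) : Set L3) ∧
    {x : L3 | ∀ y : L3, B' x y = 0} = (ℒ3 (1, 0) : Set L3) := by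
  have kB := keyB B hB
  have kB' := keyB' B' hB'
  refine ⟨⟨φ0, ?_, ?_⟩, ?_, ?_, ?_⟩
  · intro x y
    rw [kB, kB']
    funext i
    show (![_,_,_] : L3) i = _
    fin_cases i <;> simp [φ0] <;> ring
  · intro g
    by_cases h1 : g = (1,0)
    · refine ⟨(1,1), ?_⟩
      rw [h1, L3_10, L3_11, Submodule.map_span, Set.image_singleton]
      have himg : (φ0 : L3 →ₗ[ℂ] L3) ![1,0,0] = ![0,1,0] := by
        funext i; fin_cases i <;> simp [φ0]
      rw [himg]
    by_cases h2 : g = (1,1)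
    · refine ⟨(0,1), ?_⟩
      rw [h2, L3_11, L3_01, Submodule.map_span, Set.image_singleton]
      have himg : (φ0 : L3 →ₗ[ℂ] L3) ![0,1,0] = ![0,0,1] := by
        funext i; fin_cases i <;> simp [φ0]
      rw [himg]
    by_cases h3 : g = (0,1)
    · refine ⟨(1,0), ?_⟩
      rw [h3, L3_01, L3_10, Submodule.map_span, Set.image_singleton]
      have himg : (φ0 : L3 →ₗ[ℂ] L3) ![0,0,1] = ![1,0,0] := by
        funext i; fin_cases i <;> simp [φ0]
      rw [himg]
    · exact ⟨g, by rw [L3_bot g h1 h2 h3, Submodule.map_bot]⟩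
  · rintro ⟨φ, hint, hg⟩
    -- φ e₂ ∈ ℒ3 (0,1) = span {e₂}
    have hmem : φ ![0,0,1] ∈ ℒ3 (0,1) := by
      rw [← hg (0,1)]
      exact Submodule.mem_map_of_mem mem01
    rw [L3_01, Submodule.mem_span_singleton] at hmem
    obtain ⟨c, hc⟩ := hmem
    -- φ e₂ is central for B'
    have hcent : ∀ y : L3, B' (φ ![0,0,1]) y = 0 := by
      intro y
      have := hint ![0,0,1] (φ.symm y)
      rw [kB] at this
      simp only [Matrix.cons_val_zero, Matrix.cons_val_one, Matrix.head_cons] at this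
      rw [LinearEquiv.apply_symm_apply] at this
      rw [← this]
      norm_num
    have h1 := hcent ![0,1,0]
    rw [← hc, kB'] at h1
    have h2 := congrFun h1 0
    simp at h2
    have hφ0 : φ ![0,0,1] = 0 := by rw [← hc, h2, zero_smul]
    have h3 : (![0,0,1] : L3) = 0 := φ.injective (by rw [hφ0, map_zero])
    simpa using congrFun h3 2
  · ext x
    simp only [Set.mem_setOf_eq, SetLike.mem_coe, L3_01, Submodule.mem_span_singleton]
    constructor
    · intro h
      have h1 := congrFun (h ![0,1,0]) 2
      have h2 := congrFun (h ![1,0,0]) 2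
      rw [kB] at h1 h2
      simp at h1 h2
      exact ⟨x 2, by funext i; fin_cases i <;> simp [h1, h2]⟩
    · rintro ⟨c, rfl⟩ y
      rw [kB]; norm_num
  · ext x
    simp only [Set.mem_setOf_eq, SetLike.mem_coe, L3_10, Submodule.mem_span_singleton]
    constructor
    · intro h
      have h1 := congrFun (h ![0,0,1]) 0
      have h2 := congrFun (h ![0,1,0]) 0
      rw [kB'] at h1 h2
      simp at h1 h2
      exact ⟨x 0, by funext i; fin_cases i <;> simp [h1, h2]⟩
    · rintro ⟨c, rfl⟩ y
      rw [kB']; norm_num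
      exact ⟨Or.inl (Or.inr rfl), funext (fun i => i.elim0)⟩
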